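/- Let k and E be natural numbers with k ≤ E, let L, μ be nonnegative reals and θ a real with 0 < θ < π/2. Let q₀, q₁, …, q_k and q'₀, q'₁, …, q'_k be two sequences of points in three-dimensional Euclidean space (EuclideanSpace ℝ (Fin 3)) with q'₀ = q₀, and suppose that for every i < k: (1) dist(qᵢ, qᵢ₊₁) ≤ L; (2) |dist(q'ᵢ, q'ᵢ₊₁) − dist(qᵢ, qᵢ₊₁)| ≤ μ; and (3) the angle between the vectors qᵢ₊₁ − qᵢ and q'ᵢ₊₁ − q'ᵢ is at most θ. Then dist(q_k, q'_k) ≤ E²·L·2·sin(θ/2) + E·μ. -/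

import Mathlib

open InnerProductGeometry Real RealInnerProductSpace

/-- Per-edge bound: if the angle between `v` and `v'` is at most `θ < π/2`, then
`‖v - v'‖ ≤ ‖v‖ * (2 sin (θ/2)) + |‖v'‖ - ‖v‖|`. -/
lemma edge_bound {v v' : EuclideanSpace ℝ (Fin 3)} (θ : ℝ)
    (hθ₀ : 0 < θ) (hθ₁ : θ < Real.pi / 2)
    (hang : InnerProductGeometry.angle v v' ≤ θ) :
    ‖v - v'‖ ≤ ‖v‖ * (2 * Real.sin (θ / 2)) + |‖v'‖ - ‖v‖| := by
  have hπ : θ < Real.pi := lt_trans hθ₁ (by linarith [Real.pi_pos])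
  have hv : v ≠ 0 := by
    rintro rfl
    rw [InnerProductGeometry.angle_zero_left] at hang
    linarith
  have hv' : v' ≠ 0 := by
    rintro rfl
    rw [InnerProductGeometry.angle_zero_right] at hang
    linarith
  have hnv : (0:ℝ) < ‖v‖ := norm_pos_iff.mpr hv
  have hnv' : (0:ℝ) < ‖v'‖ := norm_pos_iff.mpr hv'
  set u : EuclideanSpace ℝ (Fin 3) := ‖v‖⁻¹ • v with hu
  set u' : EuclideanSpace ℝ (Fin 3) := ‖v'‖⁻¹ • v' with hu'
  have hnu : ‖u‖ = 1 := by
    rw [hu, norm_smul, norm_inv, norm_norm, inv_mul_cancel₀ hnv.ne']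
  have hnu' : ‖u'‖ = 1 := by
    rw [hu', norm_smul, norm_inv, norm_norm, inv_mul_cancel₀ hnv'.ne']
  have hinner : (inner ℝ u u' : ℝ) = Real.cos (InnerProductGeometry.angle v v') := by
    rw [InnerProductGeometry.cos_angle, hu, hu', real_inner_smul_left,
      real_inner_smul_right]
    field_simp
  -- chord length bound
  have hcos : Real.cos θ ≤ Real.cos (InnerProductGeometry.angle v v') :=
    Real.cos_le_cos_of_nonneg_of_le_pi (InnerProductGeometry.angle_nonneg _ _) hπ.le hang
  have hcosθ : Real.cos θ = 1 - 2 * Real.sin (θ / 2) ^ 2 := by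
    have h := Real.cos_two_mul' (θ / 2)
    have h2 := Real.sin_sq_add_cos_sq (θ / 2)
    have : 2 * (θ / 2) = θ := by ring
    rw [this] at h
    nlinarith
  have hsin : 0 ≤ Real.sin (θ / 2) :=
    Real.sin_nonneg_of_nonneg_of_le_pi (by linarith) (by linarith [Real.pi_pos])
  have hsq : ‖u - u'‖ ^ 2 ≤ (2 * Real.sin (θ / 2)) ^ 2 := by
    rw [norm_sub_sq_real, hnu, hnu', hinner]
    nlinarith
  have hchord : ‖u - u'‖ ≤ 2 * Real.sin (θ / 2) := by
    nlinarith [norm_nonneg (u - u')]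
  -- decompose v - v'
  have hdecomp : v - v' = ‖v‖ • (u - u') + (‖v‖ - ‖v'‖) • u' := by
    rw [hu, hu']
    match_scalars <;> field_simp <;> ring
  calc ‖v - v'‖ ≤ ‖‖v‖ • (u - u')‖ + ‖(‖v‖ - ‖v'‖) • u'‖ := by
        rw [hdecomp]; exact norm_add_le _ _
    _ = ‖v‖ * ‖u - u'‖ + |‖v‖ - ‖v'‖| := by
        rw [norm_smul, norm_smul, hnu', Real.norm_eq_abs, Real.norm_eq_abs,
          abs_of_pos hnv, mul_one]
    _ ≤ ‖v‖ * (2 * Real.sin (θ / 2)) + |‖v'‖ - ‖v‖| := by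
        rw [abs_sub_comm]
        exact add_le_add (mul_le_mul_of_nonneg_left hchord hnv.le) le_rfl

theorem precision_bound
    (k E : ℕ) (hkE : k ≤ E) (L μ θ : ℝ) (hL : 0 ≤ L) (hμ : 0 ≤ μ)
    (hθ₀ : 0 < θ) (hθ₁ : θ < Real.pi / 2)
    (q q' : ℕ → EuclideanSpace ℝ (Fin 3)) (h0 : q' 0 = q 0)
    (hlen : ∀ i < k, dist (q i) (q (i + 1)) ≤ L)
    (hdisc : ∀ i < k, |dist (q' i) (q' (i + 1)) - dist (q i) (q (i + 1))| ≤ μ)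
    (hang : ∀ i < k,
      InnerProductGeometry.angle (q (i + 1) - q i) (q' (i + 1) - q' i) ≤ θ) :
    dist (q k) (q' k) ≤ (E : ℝ) ^ 2 * L * 2 * Real.sin (θ / 2) + E * μ := by
  have hsin : 0 ≤ Real.sin (θ / 2) :=
    Real.sin_nonneg_of_nonneg_of_le_pi (by linarith) (by linarith [Real.pi_pos])
  -- main induction: displacement ≤ k * (L * (2 sin(θ/2)) + μ)
  have key : ∀ m ≤ k, dist (q m) (q' m) ≤ m * (L * (2 * Real.sin (θ / 2)) + μ) := by
    intro m hm
    induction m with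
    | zero => simp [h0]
    | succ n ih =>
      have hn : n < k := hm
      have ihn := ih (le_of_lt hn)
      have hEdge : ‖(q (n + 1) - q n) - (q' (n + 1) - q' n)‖ ≤
          L * (2 * Real.sin (θ / 2)) + μ := by
        have h1 := edge_bound θ hθ₀ hθ₁ (hang n hn)
        have h2 : ‖q (n + 1) - q n‖ ≤ L := by
          have := hlen n hn
          rwa [dist_comm, dist_eq_norm] at this
        have h3 : |‖q' (n + 1) - q' n‖ - ‖q (n + 1) - q n‖| ≤ μ := by
          have := hdisc n hn
          rwa [dist_comm (q' n), dist_comm (q n), dist_eq_norm, dist_eq_norm] at this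
        calc ‖(q (n + 1) - q n) - (q' (n + 1) - q' n)‖
            ≤ ‖q (n + 1) - q n‖ * (2 * Real.sin (θ / 2)) +
              |‖q' (n + 1) - q' n‖ - ‖q (n + 1) - q n‖| := h1
          _ ≤ L * (2 * Real.sin (θ / 2)) + μ :=
              add_le_add (mul_le_mul_of_nonneg_right h2 (by positivity)) h3
      have htri : dist (q (n + 1)) (q' (n + 1)) ≤
          dist (q n) (q' n) + ‖(q (n + 1) - q n) - (q' (n + 1) - q' n)‖ := by
        rw [dist_eq_norm, dist_eq_norm]
        have : q (n + 1) - q' (n + 1) =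
            (q n - q' n) + ((q (n + 1) - q n) - (q' (n + 1) - q' n)) := by abel
        rw [this]
        exact norm_add_le _ _
      push_cast
      calc dist (q (n + 1)) (q' (n + 1))
          ≤ dist (q n) (q' n) + ‖(q (n + 1) - q n) - (q' (n + 1) - q' n)‖ := htri
        _ ≤ n * (L * (2 * Real.sin (θ / 2)) + μ) + (L * (2 * Real.sin (θ / 2)) + μ) :=
            add_le_add ihn hEdge
        _ = (n + 1) * (L * (2 * Real.sin (θ / 2)) + μ) := by ring
  have hk := key k le_rfl
  have hkE' : (k : ℝ) ≤ E := by exact_mod_cast hkE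
  have hE2 : (E : ℝ) ≤ (E : ℝ) ^ 2 := by
    exact_mod_cast Nat.le_self_pow two_ne_zero E
  have hstep : (0:ℝ) ≤ L * (2 * Real.sin (θ / 2)) + μ := by positivity
  calc dist (q k) (q' k) ≤ k * (L * (2 * Real.sin (θ / 2)) + μ) := hk
    _ ≤ E * (L * (2 * Real.sin (θ / 2)) + μ) :=
        mul_le_mul_of_nonneg_right hkE' hstep
    _ = E * L * 2 * Real.sin (θ / 2) + E * μ := by ring
    _ ≤ (E : ℝ) ^ 2 * L * 2 * Real.sin (θ / 2) + E * μ := by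
        have : (E:ℝ) * L * 2 * Real.sin (θ / 2) ≤ (E:ℝ)^2 * L * 2 * Real.sin (θ / 2) := by
          have h : (E:ℝ) * L ≤ (E:ℝ)^2 * L := mul_le_mul_of_nonneg_right hE2 hL
          nlinarith
        linarith
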